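/- (Solodov) Let G ≤ Homeo⁺(ℝ) be a group such that every nontrivial element has at most one fixed point, and suppose G has no global fixed point. Then every nontrivial element of the commutator subgroup [G,G] acts on ℝ without fixed points. -/

import Mathlib

instance homeoGroup {X : Type*} [TopologicalSpace X] : Group (X ≃ₜ X) where
  mul f g := g.trans f
  one := Homeomorph.refl X
  inv := Homeomorph.symm
  mul_assoc f g h := rfl
  one_mul f := rfl
  mul_one f := rfl
  inv_mul_cancel f := by ext x; exact f.symm_apply_apply x

open Filter Topology Set

namespace SolodovAux

abbrev H := ℝ ≃ₜ ℝ

lemma mul_apply (f g : H) (x : ℝ) : (f * g) x = f (g x) := rfl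
lemma one_apply (x : ℝ) : (1 : H) x = x := rfl
lemma inv_apply_apply (f : H) (x : ℝ) : (f⁻¹ : H) (f x) = x := f.symm_apply_apply x
lemma apply_inv_apply (f : H) (x : ℝ) : f ((f⁻¹ : H) x) = x := f.apply_symm_apply x
lemma pow_succ_apply (f : H) (n : ℕ) (x : ℝ) : (f ^ (n+1)) x = f ((f ^ n) x) := by
  rw [pow_succ']; rfl
lemma hcont (f : H) : Continuous (⇑f) := f.continuous

/-- eventual (at +∞) strict inequality -/
def slt (f g : H) : Prop := ∃ Y, ∀ y, Y ≤ y → f y < g y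
/-- eventual (at +∞) inequality -/
def sle (f g : H) : Prop := ∃ Y, ∀ y, Y ≤ y → f y ≤ g y

lemma slt.sle {f g : H} (h : slt f g) : sle f g := by
  obtain ⟨Y, hY⟩ := h; exact ⟨Y, fun y hy => (hY y hy).le⟩

lemma sle_refl (f : H) : sle f f := ⟨0, fun y _ => le_rfl⟩

lemma sle_of_eq {f g : H} (h : f = g) : sle f g := h ▸ sle_refl f

lemma sle_trans {f g h : H} (h1 : sle f g) (h2 : sle g h) : sle f h := by
  obtain ⟨Y1, hY1⟩ := h1; obtain ⟨Y2, hY2⟩ := h2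
  exact ⟨max Y1 Y2, fun y hy => le_trans (hY1 y (le_trans (le_max_left _ _) hy))
    (hY2 y (le_trans (le_max_right _ _) hy))⟩

section Main

variable {G : Subgroup H}
variable (hmono : ∀ g ∈ G, Monotone (⇑g))

section basic
include hmono

lemma sm {g : H} (hg : g ∈ G) : StrictMono (⇑g) :=
  (hmono g hg).strictMono_of_injective g.injective

/-- `z ≤ f y ↔ f⁻¹ z ≤ y` -/
lemma le_inv_iff {f : H} (hf : f ∈ G) {z y : ℝ} : (f⁻¹ : H) z ≤ y ↔ z ≤ f y := by
  constructor
  · intro h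
    have := (hmono f hf) h
    rwa [apply_inv_apply] at this
  · intro h
    by_contra hc
    push_neg at hc
    have := sm hmono hf hc
    rw [apply_inv_apply] at this
    exact absurd this (not_lt.mpr h)

lemma inv_le_iff {f : H} (hf : f ∈ G) {z y : ℝ} : y ≤ (f⁻¹ : H) z ↔ f y ≤ z := by
  constructor
  · intro h
    have := (hmono f hf) h
    rwa [apply_inv_apply] at this
  · intro h
    by_contra hc
    push_neg at hc
    have := sm hmono hf hc
    rw [apply_inv_apply] at this
    exact absurd this (not_lt.mpr h)

lemma tendsto_top {f : H} (hf : f ∈ G) : Tendsto (⇑f) atTop atTop := by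
  apply tendsto_atTop_atTop_of_monotone (hmono f hf)
  intro b
  exact ⟨(f⁻¹ : H) b, le_of_eq (apply_inv_apply f b).symm⟩

lemma sle_mul_left {f g u : H} (hu : u ∈ G) (h : sle f g) : sle (u * f) (u * g) := by
  obtain ⟨Y, hY⟩ := h
  exact ⟨Y, fun y hy => hmono u hu (hY y hy)⟩

lemma sle_mul_right {f g v : H} (hv : v ∈ G) (h : sle f g) : sle (f * v) (g * v) := by
  obtain ⟨Y, hY⟩ := h
  refine ⟨(v⁻¹ : H) Y, fun y hy => ?_⟩
  exact hY (v y) ((le_inv_iff hmono hv).mp hy)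

lemma sle_mul {f g f' g' : H} (hf : f ∈ G) (hg' : g' ∈ G) (h1 : sle f g) (h2 : sle f' g') :
    sle (f * f') (g * g') :=
  sle_trans (sle_mul_left hmono hf h2) (sle_mul_right hmono hg' h1)

lemma sle_inv {f g : H} (hf : f ∈ G) (hg : g ∈ G) (h : sle f g) :
    sle (g⁻¹ : H) (f⁻¹ : H) := by
  obtain ⟨Y, hY⟩ := h
  refine ⟨max (f Y) (g Y), fun z hz => ?_⟩
  have hgY : Y ≤ (g⁻¹ : H) z := by
    rw [inv_le_iff hmono hg]; exact le_trans (le_max_right _ _) hz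
  rw [inv_le_iff hmono hf]
  exact le_trans (hY _ hgY) (by rw [apply_inv_apply])

lemma sle_pow {f g : H} (hf : f ∈ G) (hg : g ∈ G) (h : sle f g) (n : ℕ) :
    sle (f ^ n) (g ^ n) := by
  induction n with
  | zero => simpa using sle_refl 1
  | succ n ih =>
      rw [pow_succ, pow_succ]
      exact sle_mul hmono (pow_mem hf n) hg ih h

end basic
end Main

section Main2

variable {G : Subgroup H}
variable (hmono : ∀ g ∈ G, Monotone (⇑g))
variable (hone : ∀ g ∈ G, g ≠ 1 → {x : ℝ | g x = x}.Subsingleton)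

/-- If `k` crosses the diagonal upward somewhere, i.e. `k a ≥ a`, `k b ≤ b`, there is a
fixed point in `[a,b]`. -/
lemma exists_fix_down (k : H) (a b : ℝ) (hab : a ≤ b) (h1 : a ≤ k a) (h2 : k b ≤ b) :
    ∃ z ∈ Icc a b, k z = z := by
  have hc : ContinuousOn (fun y => k y - y) (Icc a b) :=
    ((hcont k).sub continuous_id).continuousOn
  have h0 : (0:ℝ) ∈ Icc (k b - b) (k a - a) := ⟨by linarith, by linarith⟩
  obtain ⟨z, hz, hz0⟩ := intermediate_value_Icc' hab hc h0
  simp only [] at hz0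
  exact ⟨z, hz, by linarith⟩

lemma exists_fix_up (k : H) (a b : ℝ) (hab : a ≤ b) (h1 : k a ≤ a) (h2 : b ≤ k b) :
    ∃ z ∈ Icc a b, k z = z := by
  have hc : ContinuousOn (fun y => k y - y) (Icc a b) :=
    ((hcont k).sub continuous_id).continuousOn
  have h0 : (0:ℝ) ∈ Icc (k a - a) (k b - b) := ⟨by linarith, by linarith⟩
  obtain ⟨z, hz, hz0⟩ := intermediate_value_Icc hab hc h0
  simp only [] at hz0
  exact ⟨z, hz, by linarith⟩

include hone

/-- An element of `G` with two distinct fixed points and one non-fixed point is impossible. -/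
lemma no_two_fix {k : H} (hk : k ∈ G) {z₁ z₂ y : ℝ} (h1 : k z₁ = z₁) (h2 : k z₂ = z₂)
    (hne : z₁ ≠ z₂) (hy : k y ≠ y) : False := by
  have hk1 : k ≠ 1 := fun h => hy (by rw [h]; rfl)
  exact hne (hone k hk hk1 h1 h2)

/-- sign pattern `+,-,+` at `a < b < c` gives a contradiction -/
lemma no_updown (k : H) (hk : k ∈ G) (a b c : ℝ) (hab : a < b) (hbc : b < c)
    (h1 : a < k a) (h2 : k b < b) (h3 : c < k c) : False := by
  obtain ⟨z₁, hz₁, hfix₁⟩ := exists_fix_down k a b hab.le h1.le h2.le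
  obtain ⟨z₂, hz₂, hfix₂⟩ := exists_fix_up k b c hbc.le h2.le h3.le
  have hz₁b : z₁ ≠ b := by rintro rfl; rw [hfix₁] at h2; exact lt_irrefl _ h2
  have hz₂b : z₂ ≠ b := by rintro rfl; rw [hfix₂] at h2; exact lt_irrefl _ h2
  have : z₁ ≠ z₂ := by
    have l1 : z₁ < b := lt_of_le_of_ne hz₁.2 hz₁b
    have l2 : b < z₂ := lt_of_le_of_ne hz₂.1 (Ne.symm hz₂b)
    exact ne_of_lt (lt_trans l1 l2)
  exact no_two_fix hone hk hfix₁ hfix₂ this (fun h => by rw [h] at h2; exact lt_irrefl _ h2)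

/-- sign pattern `-,+,-` at `a < b < c` gives a contradiction -/
lemma no_downup (k : H) (hk : k ∈ G) (a b c : ℝ) (hab : a < b) (hbc : b < c)
    (h1 : k a < a) (h2 : b < k b) (h3 : k c < c) : False := by
  obtain ⟨z₁, hz₁, hfix₁⟩ := exists_fix_up k a b hab.le h1.le h2.le
  obtain ⟨z₂, hz₂, hfix₂⟩ := exists_fix_down k b c hbc.le h2.le h3.le
  have hz₁b : z₁ ≠ b := by rintro rfl; rw [hfix₁] at h2; exact lt_irrefl _ h2
  have hz₂b : z₂ ≠ b := by rintro rfl; rw [hfix₂] at h2; exact lt_irrefl _ h2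
  have : z₁ ≠ z₂ := by
    have l1 : z₁ < b := lt_of_le_of_ne hz₁.2 hz₁b
    have l2 : b < z₂ := lt_of_le_of_ne hz₂.1 (Ne.symm hz₂b)
    exact ne_of_lt (lt_trans l1 l2)
  exact no_two_fix hone hk hfix₁ hfix₂ this (fun h => by rw [h] at h2; exact lt_irrefl _ h2)

include hmono

/-- Trichotomy for the eventual order at `+∞`. -/
lemma tri {f g : H} (hf : f ∈ G) (hg : g ∈ G) : f = g ∨ slt f g ∨ slt g f := by
  by_cases hfg : f = g
  · exact Or.inl hfg
  right
  set k : H := g⁻¹ * f with hk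
  have hkG : k ∈ G := mul_mem (inv_mem hg) hf
  have hk1 : k ≠ 1 := by
    intro h
    apply hfg
    have := congrArg (fun x => g * x) h
    simpa [hk, ← mul_assoc] using this
  have hsub := hone k hkG hk1
  -- a bound beyond which k y ≠ y
  obtain ⟨Y₀, hY₀⟩ : ∃ Y₀, ∀ y, Y₀ ≤ y → k y ≠ y := by
    by_cases hex : ∃ p, k p = p
    · obtain ⟨p, hp⟩ := hex
      exact ⟨p + 1, fun y hy hk' => by
        have := hsub (show y ∈ {x | k x = x} from hk') (show p ∈ {x | k x = x} from hp)
        linarith⟩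
    · push_neg at hex
      exact ⟨0, fun y _ => hex y⟩
  have hne : ∀ y, Y₀ ≤ y → f y ≠ g y := by
    intro y hy hfy
    exact hY₀ y hy (by simp [hk, mul_apply, hfy, inv_apply_apply])
  -- sign is constant on [Y₀, ∞)
  have key : ∀ y, Y₀ ≤ y → ((f y < g y) ↔ (f Y₀ < g Y₀)) := by
    intro y hy
    constructor
    · intro h1
      by_contra h2
      push_neg at h2
      have h2' : g Y₀ < f Y₀ := lt_of_le_of_ne h2 (Ne.symm (hne Y₀ le_rfl))
      -- f - g changes sign on [Y₀, y]: IVT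
      have hc : ContinuousOn (fun y => f y - g y) (Icc Y₀ y) :=
        ((hcont f).sub (hcont g)).continuousOn
      have h0 : (0:ℝ) ∈ Icc (f y - g y) (f Y₀ - g Y₀) := ⟨by linarith, by linarith⟩
      obtain ⟨z, hz, hz0⟩ := intermediate_value_Icc' hy hc h0
      simp only [] at hz0
      exact hne z hz.1 (by linarith)
    · intro h1
      by_contra h2
      push_neg at h2
      have h2' : g y < f y := lt_of_le_of_ne h2 (Ne.symm (hne y hy))
      have hc : ContinuousOn (fun y => f y - g y) (Icc Y₀ y) :=
        ((hcont f).sub (hcont g)).continuousOn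
      have h0 : (0:ℝ) ∈ Icc (f Y₀ - g Y₀) (f y - g y) := ⟨by linarith, by linarith⟩
      obtain ⟨z, hz, hz0⟩ := intermediate_value_Icc hy hc h0
      simp only [] at hz0
      exact hne z hz.1 (by linarith)
  by_cases h : f Y₀ < g Y₀
  · exact Or.inl ⟨Y₀, fun y hy => (key y hy).mpr h⟩
  · refine Or.inr ⟨Y₀, fun y hy => ?_⟩
    have : ¬ (f y < g y) := fun hlt => h ((key y hy).mp hlt)
    exact lt_of_le_of_ne (not_lt.mp this) (Ne.symm (hne y hy))

/-- Monotone orbit converging up to the fixed point. -/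
lemma orbit_up {g : H} (hg : g ∈ G) (hg1 : g ≠ 1) {p : ℝ} (hp : g p = p)
    (hside : ∀ z, z < p → z < g z) {y : ℝ} (hy : y < p) :
    Tendsto (fun n => (g ^ n) y) atTop (𝓝 p) := by
  set s : ℕ → ℝ := fun n => (g ^ n) y with hs
  have hlt : ∀ n, s n < p := by
    intro n
    induction n with
    | zero => simpa [hs] using hy
    | succ n ih =>
        have : g (s n) < g p := sm hmono hg ih
        rwa [hp, hs, ← pow_succ_apply] at this
  have hstep : ∀ n, s n < s (n + 1) := by
    intro n
    have := hside (s n) (hlt n)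
    rwa [hs, ← pow_succ_apply] at this
  have hmon : Monotone s := monotone_nat_of_le_succ (fun n => (hstep n).le)
  have hbdd : BddAbove (range s) := ⟨p, by rintro _ ⟨n, rfl⟩; exact (hlt n).le⟩
  have htend : Tendsto s atTop (𝓝 (⨆ n, s n)) := tendsto_atTop_ciSup hmon hbdd
  set L := ⨆ n, s n with hL
  have h1 : Tendsto (fun n => s (n + 1)) atTop (𝓝 L) :=
    htend.comp (tendsto_add_atTop_nat 1)
  have h2 : Tendsto (fun n => g (s n)) atTop (𝓝 (g L)) :=
    ((hcont g).tendsto L).comp htend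
  have h3 : (fun n => s (n + 1)) = fun n => g (s n) := by
    funext n; rw [hs]; exact pow_succ_apply g n y
  have hfixL : g L = L := tendsto_nhds_unique (h3 ▸ h2) h1
  have hLp : L = p := hone g hg hg1 (show L ∈ {x | g x = x} from hfixL)
    (show p ∈ {x | g x = x} from hp)
  rwa [hLp] at htend

/-- Monotone orbit escaping to `+∞`. -/
lemma orbit_up_top {g : H} (hg : g ∈ G) (hg1 : g ≠ 1) {p : ℝ} (hp : g p = p)
    (hside : ∀ z, p < z → z < g z) {y : ℝ} (hy : p < y) :
    Tendsto (fun n => (g ^ n) y) atTop atTop := by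
  set s : ℕ → ℝ := fun n => (g ^ n) y with hs
  have hlt : ∀ n, p < s n := by
    intro n
    induction n with
    | zero => simpa [hs] using hy
    | succ n ih =>
        have h1 : g p < g (s n) := sm hmono hg ih
        rw [hp] at h1
        have h2 : s (n + 1) = g (s n) := pow_succ_apply g n y
        rw [h2]; exact h1
  have hstep : ∀ n, s n < s (n + 1) := by
    intro n
    have := hside (s n) (hlt n)
    rwa [hs, ← pow_succ_apply] at this
  have hmon : Monotone s := monotone_nat_of_le_succ (fun n => (hstep n).le)
  have hnb : ¬ BddAbove (range s) := by
    intro hbdd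
    have htend : Tendsto s atTop (𝓝 (⨆ n, s n)) := tendsto_atTop_ciSup hmon hbdd
    set L := ⨆ n, s n with hL
    have h1 : Tendsto (fun n => s (n + 1)) atTop (𝓝 L) :=
      htend.comp (tendsto_add_atTop_nat 1)
    have h2 : Tendsto (fun n => g (s n)) atTop (𝓝 (g L)) :=
      ((hcont g).tendsto L).comp htend
    have h3 : (fun n => s (n + 1)) = fun n => g (s n) := by
      funext n; rw [hs]; exact pow_succ_apply g n y
    have hfixL : g L = L := tendsto_nhds_unique (h3 ▸ h2) h1
    have hLp : L = p := hone g hg hg1 (show L ∈ {x | g x = x} from hfixL)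
      (show p ∈ {x | g x = x} from hp)
    have : s 0 ≤ L := le_ciSup hbdd 0
    rw [hLp] at this
    exact absurd this (not_le.mpr (hlt 0))
  apply tendsto_atTop_atTop_of_monotone hmon
  intro b
  rw [not_bddAbove_iff] at hnb
  obtain ⟨x, ⟨n, rfl⟩, hx⟩ := hnb b
  exact ⟨n, hx.le⟩

/-- Antitone orbit converging down to the fixed point. -/
lemma orbit_down {g : H} (hg : g ∈ G) (hg1 : g ≠ 1) {p : ℝ} (hp : g p = p)
    (hside : ∀ z, p < z → g z < z) {y : ℝ} (hy : p < y) :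
    Tendsto (fun n => (g ^ n) y) atTop (𝓝 p) := by
  set s : ℕ → ℝ := fun n => (g ^ n) y with hs
  have hlt : ∀ n, p < s n := by
    intro n
    induction n with
    | zero => simpa [hs] using hy
    | succ n ih =>
        have : g p < g (s n) := sm hmono hg ih
        rwa [hp, hs, ← pow_succ_apply] at this
  have hstep : ∀ n, s (n + 1) < s n := by
    intro n
    have := hside (s n) (hlt n)
    rwa [hs, ← pow_succ_apply] at this
  have hmon : Antitone s := antitone_nat_of_succ_le (fun n => (hstep n).le)
  have hbdd : BddBelow (range s) := ⟨p, by rintro _ ⟨n, rfl⟩; exact (hlt n).le⟩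
  have htend : Tendsto s atTop (𝓝 (⨅ n, s n)) := tendsto_atTop_ciInf hmon hbdd
  set L := ⨅ n, s n with hL
  have h1 : Tendsto (fun n => s (n + 1)) atTop (𝓝 L) :=
    htend.comp (tendsto_add_atTop_nat 1)
  have h2 : Tendsto (fun n => g (s n)) atTop (𝓝 (g L)) :=
    ((hcont g).tendsto L).comp htend
  have h3 : (fun n => s (n + 1)) = fun n => g (s n) := by
    funext n; rw [hs]; exact pow_succ_apply g n y
  have hfixL : g L = L := tendsto_nhds_unique (h3 ▸ h2) h1
  have hLp : L = p := hone g hg hg1 (show L ∈ {x | g x = x} from hfixL)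
    (show p ∈ {x | g x = x} from hp)
  rwa [hLp] at htend

/-- Antitone orbit escaping to `-∞`. -/
lemma orbit_down_bot {g : H} (hg : g ∈ G) (hg1 : g ≠ 1) {p : ℝ} (hp : g p = p)
    (hside : ∀ z, z < p → g z < z) {y : ℝ} (hy : y < p) :
    Tendsto (fun n => (g ^ n) y) atTop atBot := by
  set s : ℕ → ℝ := fun n => (g ^ n) y with hs
  have hlt : ∀ n, s n < p := by
    intro n
    induction n with
    | zero => simpa [hs] using hy
    | succ n ih =>
        have : g (s n) < g p := sm hmono hg ih
        rwa [hp, hs, ← pow_succ_apply] at this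
  have hstep : ∀ n, s (n + 1) < s n := by
    intro n
    have := hside (s n) (hlt n)
    rwa [hs, ← pow_succ_apply] at this
  have hmon : Antitone s := antitone_nat_of_succ_le (fun n => (hstep n).le)
  have hnb : ¬ BddBelow (range s) := by
    intro hbdd
    have htend : Tendsto s atTop (𝓝 (⨅ n, s n)) := tendsto_atTop_ciInf hmon hbdd
    set L := ⨅ n, s n with hL
    have h1 : Tendsto (fun n => s (n + 1)) atTop (𝓝 L) :=
      htend.comp (tendsto_add_atTop_nat 1)
    have h2 : Tendsto (fun n => g (s n)) atTop (𝓝 (g L)) :=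
      ((hcont g).tendsto L).comp htend
    have h3 : (fun n => s (n + 1)) = fun n => g (s n) := by
      funext n; rw [hs]; exact pow_succ_apply g n y
    have hfixL : g L = L := tendsto_nhds_unique (h3 ▸ h2) h1
    have hLp : L = p := hone g hg hg1 (show L ∈ {x | g x = x} from hfixL)
      (show p ∈ {x | g x = x} from hp)
    have : L ≤ s 0 := ciInf_le hbdd 0
    rw [hLp] at this
    exact absurd this (not_le.mpr (hlt 0))
  apply tendsto_atTop_atBot_of_antitone hmon
  intro b
  rw [not_bddBelow_iff] at hnb
  obtain ⟨x, ⟨n, rfl⟩, hx⟩ := hnb b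
  exact ⟨n, hx.le⟩

omit hmono hone in
lemma fix_pow {g : H} {p : ℝ} (hp : g p = p) (n : ℕ) : (g ^ n) p = p := by
  induction n with
  | zero => rfl
  | succ n ih => rw [pow_succ_apply, ih, hp]

omit hone in
lemma tendsto_bot {f : H} (hf : f ∈ G) : Tendsto (⇑f) atBot atBot := by
  apply tendsto_atBot_atBot_of_monotone (hmono f hf)
  intro b
  exact ⟨(f⁻¹ : H) b, le_of_eq (apply_inv_apply f b)⟩

section Main3

variable (hglobal : ¬ ∃ x : ℝ, ∀ g ∈ G, g x = x)

include hmono hglobal in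
lemma exists_mover_down (p : ℝ) : ∃ ρ, ρ ∈ G ∧ ρ p < p := by
  have : ∃ h ∈ G, h p ≠ p := by
    by_contra hcon
    push_neg at hcon
    exact hglobal ⟨p, hcon⟩
  obtain ⟨h, hhG, hhp⟩ := this
  rcases lt_or_gt_of_ne hhp with hlt | hgt
  · exact ⟨h, hhG, hlt⟩
  · refine ⟨h⁻¹, inv_mem hhG, ?_⟩
    have := sm hmono (inv_mem hhG) hgt
    rwa [inv_apply_apply] at this

include hmono hglobal in
lemma exists_mover_up (p : ℝ) : ∃ ρ, ρ ∈ G ∧ p < ρ p := by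
  have : ∃ h ∈ G, h p ≠ p := by
    by_contra hcon
    push_neg at hcon
    exact hglobal ⟨p, hcon⟩
  obtain ⟨h, hhG, hhp⟩ := this
  rcases lt_or_gt_of_ne hhp with hlt | hgt
  · refine ⟨h⁻¹, inv_mem hhG, ?_⟩
    have := sm hmono (inv_mem hhG) hlt
    rwa [inv_apply_apply] at this
  · exact ⟨h, hhG, hgt⟩

include hmono hone hglobal in
/-- There is no "parabolic-up" element: nontrivial, a fixed point, `> id` elsewhere. -/
lemma no_par_up {g : H} (hg : g ∈ G) {p : ℝ} (hp : g p = p)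
    (hside : ∀ z, z ≠ p → z < g z) : False := by
  have hg1 : g ≠ 1 := by
    intro h
    have := hside (p + 1) (by linarith)
    rw [h] at this
    exact lt_irrefl _ this
  obtain ⟨ρ, hρG, hρp⟩ := exists_mover_down hmono hone hglobal p
  set y₁ : ℝ := ρ p - 1 with hy₁
  have hy₁p : y₁ < p := by linarith
  have horb1 : Tendsto (fun n => ρ ((g ^ n) y₁)) atTop (𝓝 (ρ p)) :=
    ((hcont ρ).tendsto p).comp
      (orbit_up hmono hone hg hg1 hp (fun z hz => hside z (ne_of_lt hz)) hy₁p)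
  have hev1 : ∀ᶠ n in atTop, y₁ < ρ ((g ^ n) y₁) :=
    horb1.eventually (eventually_gt_nhds (by linarith))
  set y₂ : ℝ := p + 1 with hy₂
  have horb2 : Tendsto (fun n => ρ ((g ^ n) y₂)) atTop atTop :=
    (tendsto_top hmono hρG).comp
      (orbit_up_top hmono hone hg hg1 hp (fun z hz => hside z (ne_of_gt hz)) (by linarith))
  have hev2 : ∀ᶠ n in atTop, y₂ < ρ ((g ^ n) y₂) := horb2.eventually_gt_atTop y₂
  obtain ⟨n, h1, h2⟩ := (hev1.and hev2).exists
  have hmG : ρ * g ^ n ∈ G := mul_mem hρG (pow_mem hg n)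
  refine no_updown hone (ρ * g ^ n) hmG y₁ p y₂ hy₁p (by linarith) ?_ ?_ ?_
  · exact h1
  · show ρ ((g ^ n) p) < p
    rw [fix_pow hp]
    exact hρp
  · exact h2

include hmono hone hglobal in
/-- There is no "parabolic-down" element. -/
lemma no_par_down {g : H} (hg : g ∈ G) {p : ℝ} (hp : g p = p)
    (hside : ∀ z, z ≠ p → g z < z) : False := by
  have hg1 : g ≠ 1 := by
    intro h
    have := hside (p + 1) (by linarith)
    rw [h] at this
    exact lt_irrefl _ this
  obtain ⟨ρ, hρG, hρp⟩ := exists_mover_up hmono hone hglobal p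
  set y₂ : ℝ := ρ p + 1 with hy₂
  have hy₂p : p < y₂ := by linarith
  have horb2 : Tendsto (fun n => ρ ((g ^ n) y₂)) atTop (𝓝 (ρ p)) :=
    ((hcont ρ).tendsto p).comp
      (orbit_down hmono hone hg hg1 hp (fun z hz => hside z (ne_of_gt hz)) hy₂p)
  have hev2 : ∀ᶠ n in atTop, ρ ((g ^ n) y₂) < y₂ :=
    horb2.eventually (eventually_lt_nhds (by linarith))
  set y₁ : ℝ := p - 1 with hy₁
  have horb1 : Tendsto (fun n => ρ ((g ^ n) y₁)) atTop atBot :=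
    (tendsto_bot hmono hρG).comp
      (orbit_down_bot hmono hone hg hg1 hp (fun z hz => hside z (ne_of_lt hz)) (by linarith))
  have hev1 : ∀ᶠ n in atTop, ρ ((g ^ n) y₁) < y₁ := horb1.eventually_lt_atBot y₁
  obtain ⟨n, h1, h2⟩ := (hev1.and hev2).exists
  have hmG : ρ * g ^ n ∈ G := mul_mem hρG (pow_mem hg n)
  refine no_downup hone (ρ * g ^ n) hmG y₁ p y₂ (by linarith) hy₂p ?_ ?_ ?_
  · exact h1
  · show p < ρ ((g ^ n) p)
    rw [fix_pow hp]
    exact hρp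
  · exact h2

end Main3

omit hmono hone in
lemma sign_prop_right {k : H} {x₀ : ℝ} (hne : ∀ y, x₀ < y → k y ≠ y)
    {u v : ℝ} (hu : x₀ < u) (hv : x₀ < v) (h1 : u < k u) : v < k v := by
  by_contra hcon
  push_neg at hcon
  have h2 : k v < v := lt_of_le_of_ne hcon (hne v hv)
  rcases le_or_gt u v with huv | huv
  · obtain ⟨z, hz, hfz⟩ := exists_fix_down k u v huv h1.le h2.le
    exact hne z (lt_of_lt_of_le hu hz.1) hfz
  · obtain ⟨z, hz, hfz⟩ := exists_fix_up k v u huv.le h2.le h1.le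
    exact hne z (lt_of_lt_of_le hv hz.1) hfz

omit hmono hone in
lemma sign_prop_left {k : H} {x₀ : ℝ} (hne : ∀ y, y < x₀ → k y ≠ y)
    {u v : ℝ} (hu : u < x₀) (hv : v < x₀) (h1 : u < k u) : v < k v := by
  by_contra hcon
  push_neg at hcon
  have h2 : k v < v := lt_of_le_of_ne hcon (hne v hv)
  rcases le_or_gt u v with huv | huv
  · obtain ⟨z, hz, hfz⟩ := exists_fix_down k u v huv h1.le h2.le
    exact hne z (lt_of_le_of_lt hz.2 hv) hfz
  · obtain ⟨z, hz, hfz⟩ := exists_fix_up k v u huv.le h2.le h1.le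
    exact hne z (lt_of_le_of_lt hz.2 hu) hfz

omit hmono in
lemma side_right {c : H} (hc : c ∈ G) (hc1 : c ≠ 1) {x₀ : ℝ} (hfix : c x₀ = x₀) :
    (∀ y, x₀ < y → y < c y) ∨ (∀ y, x₀ < y → c y < y) := by
  have hne : ∀ y, x₀ < y → c y ≠ y := by
    intro y hy hfy
    have := hone c hc hc1 (show y ∈ {x | c x = x} from hfy) (show x₀ ∈ {x | c x = x} from hfix)
    linarith
  rcases lt_or_gt_of_ne (hne (x₀ + 1) (by linarith)) with h | h
  · right
    intro y hy
    by_contra hcon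
    push_neg at hcon
    have h1 : y < c y := lt_of_le_of_ne hcon (Ne.symm (hne y hy))
    have := sign_prop_right hne hy (show x₀ < x₀ + 1 by linarith) h1
    linarith
  · left
    exact fun y hy => sign_prop_right hne (show x₀ < x₀ + 1 by linarith) hy h

omit hmono in
lemma side_left {c : H} (hc : c ∈ G) (hc1 : c ≠ 1) {x₀ : ℝ} (hfix : c x₀ = x₀) :
    (∀ y, y < x₀ → y < c y) ∨ (∀ y, y < x₀ → c y < y) := by
  have hne : ∀ y, y < x₀ → c y ≠ y := by
    intro y hy hfy
    have := hone c hc hc1 (show y ∈ {x | c x = x} from hfy) (show x₀ ∈ {x | c x = x} from hfix)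
    linarith
  rcases lt_or_gt_of_ne (hne (x₀ - 1) (by linarith)) with h | h
  · right
    intro y hy
    by_contra hcon
    push_neg at hcon
    have h1 : y < c y := lt_of_le_of_ne hcon (Ne.symm (hne y hy))
    have := sign_prop_left hne hy (show x₀ - 1 < x₀ by linarith) h1
    linarith
  · left
    exact fun y hy => sign_prop_left hne (show x₀ - 1 < x₀ by linarith) hy h

omit hmono hone in
lemma inv_fix {c : H} {x₀ : ℝ} (hfix : c x₀ = x₀) : (c⁻¹ : H) x₀ = x₀ := by
  conv_lhs => rw [← hfix]
  exact inv_apply_apply c x₀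

omit hone in
lemma inv_above {c : H} (hc : c ∈ G) {x₀ : ℝ} (hfix : c x₀ = x₀)
    (habove : ∀ y, x₀ < y → y < c y) :
    ∀ y, x₀ < y → x₀ < (c⁻¹ : H) y ∧ (c⁻¹ : H) y < y := by
  intro y hy
  have hcu : c ((c⁻¹ : H) y) = y := apply_inv_apply c y
  have hux : x₀ < (c⁻¹ : H) y := by
    by_contra hcon
    push_neg at hcon
    have : c ((c⁻¹ : H) y) ≤ c x₀ := hmono c hc hcon
    rw [hcu, hfix] at this
    linarith
  refine ⟨hux, ?_⟩
  have := habove _ hux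
  rwa [hcu] at this

omit hone in
lemma inv_below {c : H} (hc : c ∈ G) {x₀ : ℝ} (hfix : c x₀ = x₀)
    (hbelow : ∀ y, y < x₀ → c y < y) :
    ∀ y, y < x₀ → y < (c⁻¹ : H) y ∧ (c⁻¹ : H) y < x₀ := by
  intro y hy
  have hcu : c ((c⁻¹ : H) y) = y := apply_inv_apply c y
  have hux : (c⁻¹ : H) y < x₀ := by
    by_contra hcon
    push_neg at hcon
    have : c x₀ ≤ c ((c⁻¹ : H) y) := hmono c hc hcon
    rw [hcu, hfix] at this
    linarith
  refine ⟨?_, hux⟩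
  have := hbelow _ hux
  rwa [hcu] at this

include hmono in
lemma aux_swap {f g : H} (hf : f ∈ G) (hg : g ∈ G) (hcomm : sle (g * f) (f * g)) :
    ∀ m : ℕ, sle (g * f ^ m) (f ^ m * g) := by
  intro m
  induction m with
  | zero => exact sle_of_eq (by group)
  | succ m ih =>
      have s1 : sle ((g * f ^ m) * f) ((f ^ m * g) * f) := sle_mul_right hmono hf ih
      have s2 : sle (f ^ m * (g * f)) (f ^ m * (f * g)) :=
        sle_mul_left hmono (pow_mem hf m) hcomm
      have e1 : g * f ^ (m + 1) = (g * f ^ m) * f := by rw [pow_succ]; group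
      have e2 : (f ^ m * g) * f = f ^ m * (g * f) := by group
      have e3 : f ^ m * (f * g) = f ^ (m + 1) * g := by rw [pow_succ]; group
      refine sle_trans (sle_of_eq e1) (sle_trans s1 ?_)
      refine sle_trans (sle_of_eq e2) (sle_trans s2 (sle_of_eq e3))

include hmono in
lemma sle_prod_pow {f g : H} (hf : f ∈ G) (hg : g ∈ G) (hcomm : sle (g * f) (f * g)) :
    ∀ n : ℕ, sle (g ^ n * f ^ n) ((f * g) ^ n) := by
  intro n
  induction n with
  | zero => exact sle_of_eq (by group)
  | succ n ih =>
      have s1 : sle ((g ^ n * f ^ n) * (f * g)) ((f * g) ^ n * (f * g)) :=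
        sle_mul_right hmono (mul_mem hf hg) ih
      have s2 : sle (g ^ n * (g * f ^ (n + 1))) (g ^ n * (f ^ (n + 1) * g)) :=
        sle_mul_left hmono (pow_mem hg n) (aux_swap hmono hone hf hg hcomm (n + 1))
      have e1 : (g ^ n * f ^ n) * (f * g) = g ^ n * (f ^ (n + 1) * g) := by
        rw [pow_succ]; group
      have e2 : g ^ (n + 1) * f ^ (n + 1) = g ^ n * (g * f ^ (n + 1)) := by
        rw [pow_succ g n]; group
      have e3 : (f * g) ^ (n + 1) = (f * g) ^ n * (f * g) := pow_succ _ n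
      refine sle_trans (sle_of_eq e2) (sle_trans s2 ?_)
      refine sle_trans (sle_of_eq e1.symm) (sle_trans s1 (sle_of_eq e3.symm))

section Core

variable {c : H} (hcG : c ∈ G) {x₀ : ℝ} (hfix : c x₀ = x₀)
  (hbelow : ∀ y, y < x₀ → c y < y) (habove : ∀ y, x₀ < y → y < c y)

include hcG hfix hbelow habove

omit hmono hone hcG hfix hbelow in
lemma cne1 : c ≠ 1 := by
  intro h
  have := habove (x₀ + 1) (by linarith)
  rw [h] at this
  exact lt_irrefl _ this

omit hmono hone hcG hfix hbelow in
lemma cpow_above : ∀ (n : ℕ) (y : ℝ), x₀ < y → x₀ < (c ^ n) y ∧ y ≤ (c ^ n) y := by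
  intro n
  induction n with
  | zero => exact fun y hy => ⟨hy, le_rfl⟩
  | succ n ih =>
      intro y hy
      obtain ⟨h1, h2⟩ := ih y hy
      have h3 : (c ^ n) y < c ((c ^ n) y) := habove _ h1
      rw [← pow_succ_apply] at h3
      exact ⟨lt_trans h1 h3, le_of_lt (lt_of_le_of_lt h2 h3)⟩

omit hmono hone hcG hfix hbelow in
lemma cpow_above_strict : ∀ (n : ℕ) (y : ℝ), x₀ < y → y < (c ^ (n + 1)) y := by
  intro n y hy
  obtain ⟨h1, h2⟩ := cpow_above habove n y hy
  have h3 : (c ^ n) y < c ((c ^ n) y) := habove _ h1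
  rw [← pow_succ_apply] at h3
  exact lt_of_le_of_lt h2 h3

omit hone hcG hfix hbelow in
include hcG in
lemma czp_le {a b : ℤ} (h : sle (c ^ a) (c ^ b)) : a ≤ b := by
  by_contra hcon
  push_neg at hcon
  have h1 : sle (c ^ a * c ^ (-b)) (c ^ b * c ^ (-b)) :=
    sle_mul_right hmono (zpow_mem hcG (-b)) h
  have e1 : c ^ a * c ^ (-b) = c ^ (a - b) := by
    rw [← zpow_add]; ring_nf
  have e2 : c ^ b * c ^ (-b) = (1 : H) := by
    rw [← zpow_add]; simp
  rw [e1, e2] at h1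
  obtain ⟨Y, hY⟩ := h1
  set y : ℝ := max Y (x₀ + 1) with hy
  have hYy : Y ≤ y := le_max_left _ _
  have hx₀y : x₀ < y := lt_of_lt_of_le (by linarith) (le_max_right _ _)
  have hle := hY y hYy
  have hk : c ^ (a - b) = c ^ ((a - b).toNat) := by
    rw [← zpow_natCast, Int.toNat_of_nonneg (by omega)]
  obtain ⟨k, hk'⟩ : ∃ k : ℕ, (a - b).toNat = k + 1 := by
    have : 1 ≤ (a - b).toNat := by omega
    exact ⟨(a - b).toNat - 1, by omega⟩
  rw [hk, hk'] at hle
  have := cpow_above_strict habove k y hx₀y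
  have hone' : (1 : H) y = y := rfl
  rw [hone'] at hle
  linarith

omit hone hcG hfix hbelow in
include hone hcG hfix hbelow in
lemma cinv_tendsto (z : ℝ) : Tendsto (fun m => ((c⁻¹ : H) ^ m) z) atTop (𝓝 x₀) := by
  have hinvG : (c⁻¹ : H) ∈ G := inv_mem hcG
  have hinv1 : (c⁻¹ : H) ≠ 1 := inv_ne_one.mpr (cne1 habove)
  have hinvfix : (c⁻¹ : H) x₀ = x₀ := inv_fix hfix
  rcases lt_trichotomy z x₀ with hz | hz | hz
  · exact orbit_up hmono hone hinvG hinv1 hinvfix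
      (fun w hw => (inv_below hmono hcG hfix hbelow w hw).1) hz
  · have : (fun m => ((c⁻¹ : H) ^ m) z) = fun _ => x₀ := by
      funext m
      rw [hz, fix_pow hinvfix]
    rw [this]
    exact tendsto_const_nhds
  · exact orbit_down hmono hone hinvG hinv1 hinvfix
      (fun w hw => (inv_above hmono hcG hfix habove w hw).2) hz

lemma cofinal_up : ∀ g ∈ G, ∃ M : ℕ, sle g (c ^ M) := by
  intro g hg
  by_contra hcon
  push_neg at hcon
  have hslt : ∀ M : ℕ, slt (c ^ M) g := by
    intro M
    rcases tri hmono hone (pow_mem hcG M) hg with h | h | h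
    · exact absurd (sle_of_eq h.symm) (hcon M)
    · exact h
    · exact absurd h.sle (hcon M)
  set y₀ : ℝ := x₀ - 1 with hy₀
  set y₁ : ℝ := x₀ + 1 with hy₁
  have ev0 : ∀ᶠ m in atTop, y₀ < ((c⁻¹ : H) ^ m) (g y₀) :=
    (cinv_tendsto hmono hone hcG hfix hbelow habove (g y₀)).eventually
      (eventually_gt_nhds (by linarith))
  have ev1 : ∀ᶠ m in atTop, ((c⁻¹ : H) ^ m) (g y₁) < y₁ :=
    (cinv_tendsto hmono hone hcG hfix hbelow habove (g y₁)).eventually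
      (eventually_lt_nhds (by linarith))
  obtain ⟨m, h0, h1⟩ := (ev0.and ev1).exists
  set T : H := (c⁻¹ : H) ^ m * g with hT
  have hTmem : T ∈ G := mul_mem (pow_mem (inv_mem hcG) m) hg
  obtain ⟨Y, hY⟩ := hslt m
  set y₂ : ℝ := max Y y₁ + 1 with hy₂
  have hy₂Y : Y ≤ y₂ := le_trans (le_max_left _ _) (by linarith)
  have hy₁₂ : y₁ < y₂ := lt_of_le_of_lt (le_max_right _ _) (by linarith)
  have h2 : y₂ < T y₂ := by
    have hlt := hY y₂ hy₂Y
    have := sm hmono (pow_mem (inv_mem hcG) m) hlt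
    have heq : ((c⁻¹ : H) ^ m) ((c ^ m) y₂) = y₂ := by
      rw [inv_pow]
      exact inv_apply_apply (c ^ m) y₂
    rw [heq] at this
    exact this
  exact no_updown hone T hTmem y₀ y₁ y₂ (by linarith) hy₁₂ h0 h1 h2

lemma cofinal_dn : ∀ g ∈ G, ∃ M : ℕ, sle ((c⁻¹ : H) ^ M) g := by
  intro g hg
  obtain ⟨M, hM⟩ := cofinal_up hmono hone hcG hfix hbelow habove g⁻¹ (inv_mem hg)
  refine ⟨M, ?_⟩
  have := sle_inv hmono (inv_mem hg) (pow_mem hcG M) hM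
  rwa [inv_inv, ← inv_pow] at this

lemma exists_mu (g : H) (hg : g ∈ G) (n : ℕ) :
    ∃ ub : ℤ, sle (c ^ ub) (g ^ n) ∧ ∀ z : ℤ, sle (c ^ z) (g ^ n) → z ≤ ub := by
  obtain ⟨M, hM⟩ := cofinal_up hmono hone hcG hfix hbelow habove (g ^ n) (pow_mem hg n)
  obtain ⟨M', hM'⟩ := cofinal_dn hmono hone hcG hfix hbelow habove (g ^ n) (pow_mem hg n)
  refine Int.exists_greatest_of_bdd ⟨(M : ℤ), fun z hz => ?_⟩ ⟨-(M' : ℤ), ?_⟩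
  · have h1 : sle (c ^ z) (c ^ (M : ℤ)) := by
      refine sle_trans hz ?_
      rwa [zpow_natCast]
    exact czp_le hmono hcG habove h1
  · have : ((c⁻¹ : H) ^ M') = c ^ (-(M' : ℤ)) := by
      rw [inv_pow, ← zpow_natCast, ← zpow_neg]
    rwa [this] at hM'

noncomputable def mu (g : H) (hg : g ∈ G) (n : ℕ) : ℤ :=
  (exists_mu hmono hone hcG hfix hbelow habove g hg n).choose

lemma mu_spec1 (g : H) (hg : g ∈ G) (n : ℕ) :
    sle (c ^ (mu hmono hone hcG hfix hbelow habove g hg n)) (g ^ n) :=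
  (exists_mu hmono hone hcG hfix hbelow habove g hg n).choose_spec.1

lemma mu_spec2 (g : H) (hg : g ∈ G) (n : ℕ) {z : ℤ} (hz : sle (c ^ z) (g ^ n)) :
    z ≤ mu hmono hone hcG hfix hbelow habove g hg n :=
  (exists_mu hmono hone hcG hfix hbelow habove g hg n).choose_spec.2 z hz

lemma mu_superadd (g : H) (hg : g ∈ G) (m n : ℕ) :
    mu hmono hone hcG hfix hbelow habove g hg m + mu hmono hone hcG hfix hbelow habove g hg n ≤
      mu hmono hone hcG hfix hbelow habove g hg (m + n) := by
  apply mu_spec2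
  have h1 := mu_spec1 hmono hone hcG hfix hbelow habove g hg m
  have h2 := mu_spec1 hmono hone hcG hfix hbelow habove g hg n
  have h3 : sle (c ^ (mu hmono hone hcG hfix hbelow habove g hg m +
      mu hmono hone hcG hfix hbelow habove g hg n)) (g ^ m * g ^ n) := by
    rw [zpow_add]
    exact sle_mul hmono (zpow_mem hcG _) (pow_mem hg n) h1 h2
  rwa [← pow_add] at h3

lemma mu_upper (g : H) (hg : g ∈ G) {M : ℕ} (hM : sle g (c ^ M)) (n : ℕ) :
    mu hmono hone hcG hfix hbelow habove g hg n ≤ (M : ℤ) * n := by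
  have h1 : sle (g ^ n) (c ^ (M * n)) := by
    have := sle_pow hmono hg (pow_mem hcG M) hM n
    rwa [← pow_mul] at this
  have h2 : sle (c ^ (mu hmono hone hcG hfix hbelow habove g hg n)) (c ^ ((M * n : ℕ) : ℤ)) := by
    refine sle_trans (mu_spec1 hmono hone hcG hfix hbelow habove g hg n) ?_
    rwa [zpow_natCast]
  have h3 := czp_le hmono hcG habove h2
  have : ((M * n : ℕ) : ℤ) = (M : ℤ) * n := by push_cast; ring
  omega

lemma mu_zero (g : H) (hg : g ∈ G) : mu hmono hone hcG hfix hbelow habove g hg 0 = 0 := by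
  have h1 : mu hmono hone hcG hfix hbelow habove g hg 0 ≤ 0 := by
    have := mu_spec1 hmono hone hcG hfix hbelow habove g hg 0
    rw [pow_zero] at this
    have h2 : sle (c ^ (mu hmono hone hcG hfix hbelow habove g hg 0)) (c ^ (0 : ℤ)) := by
      rwa [zpow_zero]
    exact czp_le hmono hcG habove h2
  have h2 : (0 : ℤ) ≤ mu hmono hone hcG hfix hbelow habove g hg 0 := by
    apply mu_spec2
    rw [zpow_zero, pow_zero]
    exact sle_refl 1
  omega

lemma mu_subadd (g : H) (hg : g ∈ G) :
    Subadditive (fun n => -(mu hmono hone hcG hfix hbelow habove g hg n : ℝ)) := by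
  intro m n
  have h := mu_superadd hmono hone hcG hfix hbelow habove g hg m n
  have h2 : ((mu hmono hone hcG hfix hbelow habove g hg m +
      mu hmono hone hcG hfix hbelow habove g hg n : ℤ) : ℝ) ≤
      ((mu hmono hone hcG hfix hbelow habove g hg (m + n) : ℤ) : ℝ) := by exact_mod_cast h
  push_cast at h2
  simp only []
  linarith

noncomputable def phi (g : H) (hg : g ∈ G) : ℝ :=
  -(mu_subadd hmono hone hcG hfix hbelow habove g hg).lim

lemma phi_tendsto (g : H) (hg : g ∈ G) :
    Tendsto (fun n => (mu hmono hone hcG hfix hbelow habove g hg n : ℝ) / n) atTop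
      (𝓝 (phi hmono hone hcG hfix hbelow habove g hg)) := by
  obtain ⟨M, hM⟩ := cofinal_up hmono hone hcG hfix hbelow habove g hg
  have hb : BddBelow (range fun n : ℕ =>
      (-(mu hmono hone hcG hfix hbelow habove g hg n : ℝ)) / n) := by
    refine ⟨-(M : ℝ), ?_⟩
    rintro x ⟨n, rfl⟩
    rcases Nat.eq_zero_or_pos n with hn | hn
    · subst hn
      simp [mu_zero hmono hone hcG hfix hbelow habove g hg]
    · have h1 := mu_upper hmono hone hcG hfix hbelow habove g hg hM n
      have h2 : ((mu hmono hone hcG hfix hbelow habove g hg n : ℤ) : ℝ) ≤ (((M : ℤ) * n : ℤ) : ℝ) := by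
        exact_mod_cast h1
      push_cast at h2
      have hn' : (0 : ℝ) < n := by exact_mod_cast hn
      show -(M : ℝ) ≤ -(mu hmono hone hcG hfix hbelow habove g hg n : ℝ) / n
      rw [le_div_iff₀ hn']
      linarith
  have ht := (mu_subadd hmono hone hcG hfix hbelow habove g hg).tendsto_lim hb
  have ht2 := ht.neg
  have he : (fun n : ℕ => -((-(mu hmono hone hcG hfix hbelow habove g hg n : ℝ)) / n)) =
      fun n : ℕ => (mu hmono hone hcG hfix hbelow habove g hg n : ℝ) / n := by
    funext n
    rw [neg_div, neg_neg]
  rw [he] at ht2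
  exact ht2

lemma mu_c (n : ℕ) : mu hmono hone hcG hfix hbelow habove c hcG n = n := by
  have h1 : mu hmono hone hcG hfix hbelow habove c hcG n ≤ n := by
    have h := mu_spec1 hmono hone hcG hfix hbelow habove c hcG n
    have h2 : sle (c ^ (mu hmono hone hcG hfix hbelow habove c hcG n)) (c ^ (n : ℤ)) := by
      rwa [zpow_natCast]
    exact czp_le hmono hcG habove h2
  have h2 : (n : ℤ) ≤ mu hmono hone hcG hfix hbelow habove c hcG n := by
    apply mu_spec2
    rw [zpow_natCast]
    exact sle_refl _
  omega

lemma phi_c : phi hmono hone hcG hfix hbelow habove c hcG = 1 := by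
  have ht := phi_tendsto hmono hone hcG hfix hbelow habove c hcG
  have he : (fun n : ℕ => (mu hmono hone hcG hfix hbelow habove c hcG n : ℝ) / n) =ᶠ[atTop]
      (fun _ : ℕ => (1 : ℝ)) := by
    filter_upwards [eventually_ge_atTop 1] with n hn
    rw [mu_c hmono hone hcG hfix hbelow habove n]
    have hn' : (n : ℝ) ≠ 0 := by
      have : (0:ℝ) < n := Nat.cast_pos.mpr hn
      linarith
    field_simp
    simp
  have ht2 : Tendsto (fun _ : ℕ => (1 : ℝ)) atTop
      (𝓝 (phi hmono hone hcG hfix hbelow habove c hcG)) := Tendsto.congr' he ht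
  exact tendsto_nhds_unique ht2 tendsto_const_nhds

lemma mu_inv_le (g : H) (hg : g ∈ G) (n : ℕ) :
    mu hmono hone hcG hfix hbelow habove g⁻¹ (inv_mem hg) n ≤
      - mu hmono hone hcG hfix hbelow habove g hg n := by
  have h := mu_spec1 hmono hone hcG hfix hbelow habove g⁻¹ (inv_mem hg) n
  have h2 := sle_inv hmono (zpow_mem hcG _) (pow_mem (inv_mem hg) n) h
  rw [inv_pow, inv_inv, ← zpow_neg] at h2
  have h3 : sle (c ^ (mu hmono hone hcG hfix hbelow habove g hg n))
      (c ^ (-(mu hmono hone hcG hfix hbelow habove g⁻¹ (inv_mem hg) n))) :=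
    sle_trans (mu_spec1 hmono hone hcG hfix hbelow habove g hg n) h2
  have := czp_le hmono hcG habove h3
  omega

lemma mu_inv_ge (g : H) (hg : g ∈ G) (n : ℕ) :
    - mu hmono hone hcG hfix hbelow habove g hg n - 1 ≤
      mu hmono hone hcG hfix hbelow habove g⁻¹ (inv_mem hg) n := by
  apply mu_spec2
  have hnot : ¬ sle (c ^ (mu hmono hone hcG hfix hbelow habove g hg n + 1)) (g ^ n) := by
    intro hc
    have := mu_spec2 hmono hone hcG hfix hbelow habove g hg n hc
    omega
  have hle : sle (g ^ n) (c ^ (mu hmono hone hcG hfix hbelow habove g hg n + 1)) := by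
    rcases tri hmono hone (pow_mem hg n) (zpow_mem hcG _) with h | h | h
    · exact sle_of_eq h
    · exact h.sle
    · exact absurd h.sle hnot
  have h2 := sle_inv hmono (pow_mem hg n) (zpow_mem hcG _) hle
  rw [← zpow_neg, ← inv_pow] at h2
  have e : -(mu hmono hone hcG hfix hbelow habove g hg n) - 1 =
      -(mu hmono hone hcG hfix hbelow habove g hg n + 1) := by ring
  rw [e]
  exact h2

lemma phi_inv (g : H) (hg : g ∈ G) :
    phi hmono hone hcG hfix hbelow habove g⁻¹ (inv_mem hg) =
      - phi hmono hone hcG hfix hbelow habove g hg := by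
  have t1 := phi_tendsto hmono hone hcG hfix hbelow habove g hg
  have t2 := phi_tendsto hmono hone hcG hfix hbelow habove g⁻¹ (inv_mem hg)
  have hsum := t2.add t1
  have hub : ∀ᶠ n : ℕ in atTop,
      (mu hmono hone hcG hfix hbelow habove g⁻¹ (inv_mem hg) n : ℝ) / n +
        (mu hmono hone hcG hfix hbelow habove g hg n : ℝ) / n ≤ 0 := by
    filter_upwards [eventually_ge_atTop 1] with n hn
    have hn' : (0 : ℝ) < n := Nat.cast_pos.mpr hn
    have h1 := mu_inv_le hmono hone hcG hfix hbelow habove g hg n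
    have h1' : (mu hmono hone hcG hfix hbelow habove g⁻¹ (inv_mem hg) n : ℝ) ≤
        -(mu hmono hone hcG hfix hbelow habove g hg n : ℝ) := by exact_mod_cast h1
    rw [← add_div]
    apply div_nonpos_of_nonpos_of_nonneg _ hn'.le
    linarith
  have h1 : phi hmono hone hcG hfix hbelow habove g⁻¹ (inv_mem hg) +
      phi hmono hone hcG hfix hbelow habove g hg ≤ 0 := le_of_tendsto hsum hub
  have hlb : ∀ᶠ n : ℕ in atTop, -1 / (n : ℝ) ≤
      (mu hmono hone hcG hfix hbelow habove g⁻¹ (inv_mem hg) n : ℝ) / n +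
        (mu hmono hone hcG hfix hbelow habove g hg n : ℝ) / n := by
    filter_upwards [eventually_ge_atTop 1] with n hn
    have hn' : (0 : ℝ) < n := Nat.cast_pos.mpr hn
    have h2 := mu_inv_ge hmono hone hcG hfix hbelow habove g hg n
    have h2' : -(mu hmono hone hcG hfix hbelow habove g hg n : ℝ) - 1 ≤
        (mu hmono hone hcG hfix hbelow habove g⁻¹ (inv_mem hg) n : ℝ) := by exact_mod_cast h2
    rw [← add_div, div_le_div_iff₀ hn' hn']
    ring_nf
    nlinarith [hn'.le]
  have htz : Tendsto (fun n : ℕ => -1 / (n : ℝ)) atTop (𝓝 0) := by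
    have := (tendsto_one_div_atTop_nhds_zero_nat (𝕜 := ℝ)).neg
    simp only [neg_zero] at this
    convert this using 2 with n
    rw [neg_div]
  have h2 : (0 : ℝ) ≤ phi hmono hone hcG hfix hbelow habove g⁻¹ (inv_mem hg) +
      phi hmono hone hcG hfix hbelow habove g hg :=
    le_of_tendsto_of_tendsto htz hsum hlb
  linarith

lemma mu_mul_ge (g : H) (hg : g ∈ G) (h : H) (hh : h ∈ G) :
    ∃ C : ℤ, ∀ n : ℕ,
      mu hmono hone hcG hfix hbelow habove g hg n +
        mu hmono hone hcG hfix hbelow habove h hh n + C ≤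
        mu hmono hone hcG hfix hbelow habove (g * h) (mul_mem hg hh) n := by
  have hcases : sle (h * g) (g * h) ∨ sle (g * h) (h * g) := by
    rcases tri hmono hone (mul_mem hh hg) (mul_mem hg hh) with h' | h' | h'
    · exact Or.inl (sle_of_eq h')
    · exact Or.inl h'.sle
    · exact Or.inr h'.sle
  rcases hcases with hcomm | hcomm
  · refine ⟨0, fun n => ?_⟩
    rw [add_zero]
    apply mu_spec2
    have s0 : sle (h ^ n * g ^ n) ((g * h) ^ n) := sle_prod_pow hmono hone hg hh hcomm n
    have b1 := mu_spec1 hmono hone hcG hfix hbelow habove g hg n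
    have b2 := mu_spec1 hmono hone hcG hfix hbelow habove h hh n
    have b3 : sle (c ^ (mu hmono hone hcG hfix hbelow habove h hh n) *
        c ^ (mu hmono hone hcG hfix hbelow habove g hg n)) (h ^ n * g ^ n) :=
      sle_mul hmono (zpow_mem hcG _) (pow_mem hg n) b2 b1
    have e : c ^ (mu hmono hone hcG hfix hbelow habove g hg n +
        mu hmono hone hcG hfix hbelow habove h hh n) =
        c ^ (mu hmono hone hcG hfix hbelow habove h hh n) *
          c ^ (mu hmono hone hcG hfix hbelow habove g hg n) := by
      rw [← zpow_add]; ring_nf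
    rw [e]
    exact sle_trans b3 s0
  · obtain ⟨M', hM'⟩ := cofinal_dn hmono hone hcG hfix hbelow habove g⁻¹ (inv_mem hg)
    have hM'z : sle (c ^ (-(M' : ℤ))) g⁻¹ := by
      have e : ((c⁻¹ : H) ^ M') = c ^ (-(M' : ℤ)) := by
        rw [inv_pow, ← zpow_natCast, ← zpow_neg]
      rwa [e] at hM'
    refine ⟨mu hmono hone hcG hfix hbelow habove g hg 1 - (M' : ℤ), fun n => ?_⟩
    have key : mu hmono hone hcG hfix hbelow habove g hg (n + 1) +
        mu hmono hone hcG hfix hbelow habove h hh n - (M' : ℤ) ≤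
        mu hmono hone hcG hfix hbelow habove (g * h) (mul_mem hg hh) n := by
      apply mu_spec2
      have s0 : sle (g ^ n * h ^ n) ((h * g) ^ n) := sle_prod_pow hmono hone hh hg hcomm n
      have s1 : sle (g * (g ^ n * h ^ n)) (g * (h * g) ^ n) := sle_mul_left hmono hg s0
      have s2 : sle ((g * (g ^ n * h ^ n)) * g⁻¹) ((g * (h * g) ^ n) * g⁻¹) :=
        sle_mul_right hmono (inv_mem hg) s1
      have e1 : (g * h) ^ n = (g * (h * g) ^ n) * g⁻¹ := by
        have e0 : g * h = g * (h * g) * g⁻¹ := by group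
        rw [e0, conj_pow]
      have e2 : (g * (g ^ n * h ^ n)) * g⁻¹ = (g ^ (n + 1) * h ^ n) * g⁻¹ := by
        rw [pow_succ']; group
      have b1 := mu_spec1 hmono hone hcG hfix hbelow habove g hg (n + 1)
      have b2 := mu_spec1 hmono hone hcG hfix hbelow habove h hh n
      have b4 : sle (c ^ (mu hmono hone hcG hfix hbelow habove g hg (n + 1)) *
          c ^ (mu hmono hone hcG hfix hbelow habove h hh n)) (g ^ (n + 1) * h ^ n) :=
        sle_mul hmono (zpow_mem hcG _) (pow_mem hh n) b1 b2
      have b5 : sle ((c ^ (mu hmono hone hcG hfix hbelow habove g hg (n + 1)) *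
          c ^ (mu hmono hone hcG hfix hbelow habove h hh n)) * c ^ (-(M' : ℤ)))
          ((g ^ (n + 1) * h ^ n) * g⁻¹) :=
        sle_mul hmono (mul_mem (zpow_mem hcG _) (zpow_mem hcG _)) (inv_mem hg) b4 hM'z
      have e3 : c ^ (mu hmono hone hcG hfix hbelow habove g hg (n + 1) +
          mu hmono hone hcG hfix hbelow habove h hh n - (M' : ℤ)) =
          (c ^ (mu hmono hone hcG hfix hbelow habove g hg (n + 1)) *
            c ^ (mu hmono hone hcG hfix hbelow habove h hh n)) * c ^ (-(M' : ℤ)) := by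
        rw [← zpow_add, ← zpow_add]; ring_nf
      rw [e3, e1]
      refine sle_trans b5 ?_
      rw [← e2]
      exact s2
    have hsup := mu_superadd hmono hone hcG hfix hbelow habove g hg n 1
    omega

lemma phi_mul_ge (g : H) (hg : g ∈ G) (h : H) (hh : h ∈ G) :
    phi hmono hone hcG hfix hbelow habove g hg + phi hmono hone hcG hfix hbelow habove h hh ≤
      phi hmono hone hcG hfix hbelow habove (g * h) (mul_mem hg hh) := by
  obtain ⟨C, hC⟩ := mu_mul_ge hmono hone hcG hfix hbelow habove g hg h hh
  have ta : Tendsto (fun n : ℕ =>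
      (mu hmono hone hcG hfix hbelow habove g hg n : ℝ) / n +
      (mu hmono hone hcG hfix hbelow habove h hh n : ℝ) / n + (C : ℝ) / n) atTop
      (𝓝 (phi hmono hone hcG hfix hbelow habove g hg +
        phi hmono hone hcG hfix hbelow habove h hh + 0)) :=
    ((phi_tendsto hmono hone hcG hfix hbelow habove g hg).add
      (phi_tendsto hmono hone hcG hfix hbelow habove h hh)).add
      (tendsto_const_div_atTop_nhds_zero_nat (C : ℝ))
  rw [add_zero] at ta
  have tb := phi_tendsto hmono hone hcG hfix hbelow habove (g * h) (mul_mem hg hh)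
  refine le_of_tendsto_of_tendsto ta tb ?_
  filter_upwards [eventually_ge_atTop 1] with n hn
  have hn' : (0 : ℝ) < n := Nat.cast_pos.mpr hn
  have h1 := hC n
  have h1' : (mu hmono hone hcG hfix hbelow habove g hg n : ℝ) +
      (mu hmono hone hcG hfix hbelow habove h hh n : ℝ) + (C : ℝ) ≤
      (mu hmono hone hcG hfix hbelow habove (g * h) (mul_mem hg hh) n : ℝ) := by
    exact_mod_cast h1
  show (mu hmono hone hcG hfix hbelow habove g hg n : ℝ) / n +
      (mu hmono hone hcG hfix hbelow habove h hh n : ℝ) / n + (C : ℝ) / n ≤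
      (mu hmono hone hcG hfix hbelow habove (g * h) (mul_mem hg hh) n : ℝ) / n
  rw [← add_div, ← add_div]
  gcongr

lemma phi_mul (g : H) (hg : g ∈ G) (h : H) (hh : h ∈ G) :
    phi hmono hone hcG hfix hbelow habove (g * h) (mul_mem hg hh) =
      phi hmono hone hcG hfix hbelow habove g hg + phi hmono hone hcG hfix hbelow habove h hh := by
  have h1 := phi_mul_ge hmono hone hcG hfix hbelow habove g hg h hh
  have h2 := phi_mul_ge hmono hone hcG hfix hbelow habove h⁻¹ (inv_mem hh) g⁻¹ (inv_mem hg)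
  rw [phi_inv hmono hone hcG hfix hbelow habove h hh,
    phi_inv hmono hone hcG hfix hbelow habove g hg] at h2
  have e : h⁻¹ * g⁻¹ = (g * h)⁻¹ := (mul_inv_rev g h).symm
  have h3 : phi hmono hone hcG hfix hbelow habove (h⁻¹ * g⁻¹) (mul_mem (inv_mem hh) (inv_mem hg)) =
      phi hmono hone hcG hfix hbelow habove (g * h)⁻¹ (inv_mem (mul_mem hg hh)) := by
    congr 1
  rw [h3, phi_inv hmono hone hcG hfix hbelow habove (g * h) (mul_mem hg hh)] at h2
  linarith

lemma core_contradiction (hcomm : c ∈ ⁅G, G⁆) : False := by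
  classical
  -- the homomorphism Φ : G →* Multiplicative ℝ given by the translation number
  let Φ : ↥G →* Multiplicative ℝ :=
    MonoidHom.mk' (fun g => Multiplicative.ofAdd (phi hmono hone hcG hfix hbelow habove g.1 g.2))
      (by
        intro a b
        have := phi_mul hmono hone hcG hfix hbelow habove a.1 a.2 b.1 b.2
        have e : ((a * b : ↥G) : H) = (a : H) * (b : H) := rfl
        show Multiplicative.ofAdd (phi hmono hone hcG hfix hbelow habove ((a*b : ↥G) : H) (a*b).2) = _
        rw [← ofAdd_add]
        congr 1)
  have hker : ⁅(⊤ : Subgroup ↥G), (⊤ : Subgroup ↥G)⁆ ≤ Φ.ker := by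
    rw [Subgroup.commutator_le]
    intro g₁ _ g₂ _
    rw [MonoidHom.mem_ker, map_commutatorElement]
    exact commutatorElement_eq_one_iff_mul_comm.mpr (mul_comm _ _)
  have hmap : (⁅(⊤ : Subgroup ↥G), (⊤ : Subgroup ↥G)⁆.map G.subtype) = ⁅G, G⁆ := by
    rw [Subgroup.map_commutator, ← MonoidHom.range_eq_map, Subgroup.range_subtype]
  rw [← hmap] at hcomm
  obtain ⟨x, hx, hxc⟩ := hcomm
  have h0 : Φ x = 1 := hker hx
  have h1 : phi hmono hone hcG hfix hbelow habove x.1 x.2 = 0 := by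
    have := congrArg Multiplicative.toAdd h0
    simpa [Φ] using this
  have hxc' : (x : H) = c := hxc
  have h2 : phi hmono hone hcG hfix hbelow habove c hcG = 0 := by
    rw [← h1]
    congr 1
    exact hxc'.symm
  rw [phi_c hmono hone hcG hfix hbelow habove] at h2
  norm_num at h2

end Core

omit hone in
lemma inv_above' {c : H} (hc : c ∈ G) {x₀ : ℝ} (hfix : c x₀ = x₀)
    (hdown : ∀ y, x₀ < y → c y < y) : ∀ y, x₀ < y → y < (c⁻¹ : H) y := by
  intro y hy
  have hcu : c ((c⁻¹ : H) y) = y := apply_inv_apply c y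
  have hux : x₀ < (c⁻¹ : H) y := by
    by_contra hcon
    push_neg at hcon
    have : c ((c⁻¹ : H) y) ≤ c x₀ := hmono c hc hcon
    rw [hcu, hfix] at this
    linarith
  have := hdown _ hux
  rwa [hcu] at this

omit hone in
lemma inv_below' {c : H} (hc : c ∈ G) {x₀ : ℝ} (hfix : c x₀ = x₀)
    (hup : ∀ y, y < x₀ → y < c y) : ∀ y, y < x₀ → (c⁻¹ : H) y < y := by
  intro y hy
  have hcu : c ((c⁻¹ : H) y) = y := apply_inv_apply c y
  have hux : (c⁻¹ : H) y < x₀ := by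
    by_contra hcon
    push_neg at hcon
    have : c x₀ ≤ c ((c⁻¹ : H) y) := hmono c hc hcon
    rw [hcu, hfix] at this
    linarith
  have := hup _ hux
  rwa [hcu] at this

end Main2

end SolodovAux


/-- Solodov's theorem: if `G ≤ Homeo⁺(ℝ)` is such that every nontrivial element has at
most one fixed point and there is no global fixed point, then every nontrivial element
of the commutator subgroup `[G,G]` acts on `ℝ` without fixed points. -/
theorem solodov (G : Subgroup (ℝ ≃ₜ ℝ))
    (hmono : ∀ g ∈ G, Monotone (⇑g))
    (hone : ∀ g ∈ G, g ≠ 1 → {x : ℝ | g x = x}.Subsingleton)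
    (hglobal : ¬ ∃ x : ℝ, ∀ g ∈ G, g x = x) :
    ∀ g ∈ ⁅G, G⁆, g ≠ 1 → ∀ x : ℝ, g x ≠ x := by
  intro g hgcomm hgne x hgx
  classical
  have hsub : ⁅G, G⁆ ≤ G := by
    rw [Subgroup.commutator_le]
    intro a ha b hb
    rw [commutatorElement_def]
    exact mul_mem (mul_mem (mul_mem ha hb) (inv_mem ha)) (inv_mem hb)
  have hgG : g ∈ G := hsub hgcomm
  rcases SolodovAux.side_left hone hgG hgne hgx with hl | hl <;>
    rcases SolodovAux.side_right hone hgG hgne hgx with hr | hr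
  · -- parabolic up
    refine SolodovAux.no_par_up hmono hone hglobal hgG hgx (fun z hz => ?_)
    rcases lt_or_gt_of_ne hz with h | h
    · exact hl z h
    · exact hr z h
  · -- hyperbolic with attracting at x : use g⁻¹
    exact SolodovAux.core_contradiction hmono hone (inv_mem hgG) (SolodovAux.inv_fix hgx)
      (SolodovAux.inv_below' hmono hgG hgx hl) (SolodovAux.inv_above' hmono hgG hgx hr)
      (inv_mem hgcomm)
  · -- hyperbolic repelling at x
    exact SolodovAux.core_contradiction hmono hone hgG hgx hl hr hgcomm
  · -- parabolic down
    refine SolodovAux.no_par_down hmono hone hglobal hgG hgx (fun z hz => ?_)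
    rcases lt_or_gt_of_ne hz with h | h
    · exact hl z h
    · exact hr z h
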